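/- Let d ≥ 2 be fixed, for each n let X_n be n points chosen independently and uniformly at random from [0,1]^d, and let r_n = f_n (log n / n)^{1/d} where f_n → ∞ as n → ∞. Let q, q' ∈ [0,1]^d with q ⪯ q' and min_i(q'_i − q_i) = δ for a fixed constant δ > 0 independent of n. Then the probability of the following event tends to 1 as n → ∞: there exist X, X' ∈ X_n such that (i) ‖X − q‖₂ ≤ r_n/2 and ‖X' − q'‖₂ ≤ r_n/2; (ii) q ⪯ X and X' ⪯ q'; and (iii) there is a finite sequence X = Y_1 ⪯ Y_2 ⪯ … ⪯ Y_m = X' of points of X_n, all contained in the box H(q,q'), with ‖Y_{j+1} − Y_j‖₂ ≤ r_n for every j. -/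

import Mathlib

open MeasureTheory ProbabilityTheory Filter

noncomputable section

/-- `d`-dimensional Euclidean space. -/
abbrev E (d : ℕ) := EuclideanSpace ℝ (Fin d)

/-- The coordinatewise partial order `p ⪯ p'` on `ℝ^d`. -/
def CoordLE {d : ℕ} (p p' : E d) : Prop := ∀ i, p i ≤ p' i

/-- The unit cube `[0,1]^d`. -/
def cube (d : ℕ) : Set (E d) := {x | ∀ i, x i ∈ Set.Icc (0 : ℝ) 1}

/-- The axis-parallel box `H(a,b) = [a_1,b_1] × … × [a_d,b_d]`. -/
def box {d : ℕ} (a b : E d) : Set (E d) := {y | ∀ i, a i ≤ y i ∧ y i ≤ b i}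

lemma box_eq {d : ℕ} (a b : E d) :
    box a b = (MeasurableEquiv.toLp 2 (Fin d → ℝ)).symm ⁻¹'
      (Set.univ.pi fun i => Set.Icc (a i) (b i)) := by
  ext y
  simp only [box, Set.mem_preimage, Set.mem_pi, Set.mem_univ, forall_true_left, Set.mem_Icc,
    Set.mem_setOf_eq]
  rfl

lemma measurableSet_box {d : ℕ} (a b : E d) : MeasurableSet (box a b) := by
  rw [box_eq]
  exact (MeasurableEquiv.toLp 2 (Fin d → ℝ)).symm.measurable
    (MeasurableSet.univ_pi fun i => measurableSet_Icc)

lemma volume_box {d : ℕ} (a b : E d) :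
    volume (box a b) = ∏ i, ENNReal.ofReal (b i - a i) := by
  rw [box_eq, (EuclideanSpace.volume_preserving_symm_measurableEquiv_toLp (Fin d)).measure_preimage
    (MeasurableSet.univ_pi fun i => measurableSet_Icc).nullMeasurableSet]
  rw [volume_pi_pi]
  simp [Real.volume_Icc]

lemma P_in {d : ℕ} {Ω : Type*} [MeasurableSpace Ω] (P : Measure Ω) [IsProbabilityMeasure P]
    (X : ℕ → Ω → E d) (hXmeas : ∀ i, Measurable (X i))
    (hunif : ∀ i, P.map (X i) = volume.restrict (cube d)) (i : ℕ)
    (S : Set (E d)) (hS : MeasurableSet S) (hSc : S ⊆ cube d) :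
    P (X i ⁻¹' S) = volume S := by
  rw [← Measure.map_apply (hXmeas i) hS, hunif i, Measure.restrict_apply hS,
    Set.inter_eq_self_of_subset_left hSc]

lemma P_empty_box {d : ℕ} {Ω : Type*} [MeasurableSpace Ω] (P : Measure Ω)
    [IsProbabilityMeasure P]
    (X : ℕ → Ω → E d) (hXmeas : ∀ i, Measurable (X i))
    (hunif : ∀ i, P.map (X i) = volume.restrict (cube d))
    (hindep : iIndepFun X P)
    (B : Set (E d)) (hB : MeasurableSet B) (hBc : B ⊆ cube d) (n : ℕ) :
    P (⋂ i ∈ Finset.range n, X i ⁻¹' Bᶜ) = (1 - volume B) ^ n := by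
  rw [hindep.meas_biInter (fun i _ => ⟨Bᶜ, hB.compl, rfl⟩)]
  have : ∀ i, P (X i ⁻¹' Bᶜ) = 1 - volume B := by
    intro i
    rw [Set.preimage_compl, measure_compl (hXmeas i hB) (measure_ne_top _ _),
      measure_univ, P_in P X hXmeas hunif i B hB hBc]
  simp [Set.preimage_compl] at this
  simp [this]

lemma dist_le_of_coords {d : ℕ} (x y : E d) (c : ℝ) (hc : 0 ≤ c)
    (h : ∀ i, |x i - y i| ≤ c) : dist x y ≤ Real.sqrt d * c := by
  rw [EuclideanSpace.dist_eq]
  have h1 : ∑ i, dist (x i) (y i) ^ 2 ≤ (d : ℝ) * c ^ 2 := by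
    calc ∑ i, dist (x i) (y i) ^ 2 ≤ ∑ _i : Fin d, c ^ 2 := by
          apply Finset.sum_le_sum
          intro i _
          have := h i
          rw [Real.dist_eq]
          nlinarith [abs_nonneg (x i - y i)]
      _ = (d : ℝ) * c ^ 2 := by simp [mul_comm]
  calc Real.sqrt (∑ i, dist (x i) (y i) ^ 2) ≤ Real.sqrt ((d : ℝ) * c ^ 2) :=
        Real.sqrt_le_sqrt h1
    _ = Real.sqrt d * c := by
        rw [Real.sqrt_mul (by positivity), Real.sqrt_sq hc]

lemma det {d : ℕ} (q q' : E d) (hle : CoordLE q q') (s rr : ℝ) (hs : 0 < s)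
    (hr4 : Real.sqrt d * s ≤ rr / 4)
    (M : ℕ) (hM : 1 ≤ M) (ht : ∀ i, (q' i - q i) / M ≤ s)
    (n : ℕ) (Z : ℕ → E d)
    (H : ∀ j, j < M → ∃ i < n, Z i ∈ box
      (WithLp.toLp 2 (fun k => q k + (j : ℝ) * ((q' k - q k) / M)))
      (WithLp.toLp 2 (fun k => q k + ((j : ℝ) + 1) * ((q' k - q k) / M)))) :
    ∃ x x' : E d,
      (∃ i < n, Z i = x) ∧ (∃ i < n, Z i = x') ∧
      dist x q ≤ rr / 2 ∧ dist x' q' ≤ rr / 2 ∧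
      CoordLE q x ∧ CoordLE x' q' ∧
      ∃ (m : ℕ) (Y : ℕ → E d), Y 0 = x ∧ Y m = x' ∧
        (∀ j ≤ m, (∃ i < n, Z i = Y j) ∧ Y j ∈ box q q') ∧
        (∀ j < m, CoordLE (Y j) (Y (j + 1))) ∧
        (∀ j < m, dist (Y j) (Y (j + 1)) ≤ rr) := by
  have hrr : 0 ≤ rr := by nlinarith [mul_nonneg (Real.sqrt_nonneg (d:ℝ)) hs.le]
  have hMR : (0:ℝ) < M := by exact_mod_cast hM
  have htnn : ∀ k, 0 ≤ (q' k - q k) / M := fun k => div_nonneg (by linarith [hle k]) hMR.le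
  have hMt : ∀ k, (M : ℝ) * ((q' k - q k) / M) = q' k - q k := fun k => by field_simp
  classical
  let Y : ℕ → E d := fun j =>
    if h : j < M then Z (H j h).choose else Z (H (M-1) (by omega)).choose
  have key : ∀ j, j < M → (∃ i < n, Z i = Y j) ∧
      ∀ k, q k + (j:ℝ) * ((q' k - q k)/M) ≤ Y j k ∧
           Y j k ≤ q k + ((j:ℝ)+1) * ((q' k - q k)/M) := by
    intro j hj
    have hsp := (H j hj).choose_spec
    have hYj : Y j = Z (H j hj).choose := by simp only [Y, dif_pos hj]
    exact ⟨⟨(H j hj).choose, hsp.1, hYj.symm⟩, fun k => by rw [hYj]; exact hsp.2 k⟩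
  have hYbox : ∀ j, j < M → Y j ∈ box q q' := by
    intro j hj k
    obtain ⟨h1, h2⟩ := (key j hj).2 k
    have hj1 : ((j:ℝ) + 1) ≤ (M : ℝ) := by exact_mod_cast Nat.succ_le_of_lt hj
    have := hMt k
    constructor
    · nlinarith [htnn k, Nat.cast_nonneg (α := ℝ) j]
    · nlinarith [htnn k]
  have hd0 : dist (Y 0) q ≤ rr / 4 := by
    have hmem := (key 0 (by omega)).2
    calc dist (Y 0) q ≤ Real.sqrt d * s := by
          apply dist_le_of_coords _ _ _ hs.le
          intro k
          obtain ⟨h1, h2⟩ := hmem k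
          push_cast at h1 h2
          rw [abs_le]
          have := ht k; have := htnn k
          constructor <;> nlinarith
      _ ≤ rr / 4 := hr4
  have hdM : dist (Y (M-1)) q' ≤ rr / 4 := by
    have hmem := (key (M-1) (by omega)).2
    calc dist (Y (M-1)) q' ≤ Real.sqrt d * s := by
          apply dist_le_of_coords _ _ _ hs.le
          intro k
          obtain ⟨h1, h2⟩ := hmem k
          have hcast : ((M-1 : ℕ) : ℝ) = (M:ℝ) - 1 := by
            have : (1:ℕ) ≤ M := hM
            push_cast [this]; ring
          rw [hcast] at h1 h2
          have hq'k := hMt k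
          rw [abs_le]
          have := ht k; have := htnn k
          constructor <;> nlinarith
      _ ≤ rr / 4 := hr4
  refine ⟨Y 0, Y (M-1), (key 0 (by omega)).1, (key (M-1) (by omega)).1,
    by linarith, by linarith, ?_, ?_, M-1, Y, rfl, rfl, ?_, ?_, ?_⟩
  · intro k
    have := ((key 0 (by omega)).2 k).1
    push_cast at this
    linarith
  · intro k
    exact (hYbox (M-1) (by omega) k).2
  · intro j hj
    exact ⟨(key j (by omega)).1, hYbox j (by omega)⟩
  · intro j hj k
    have hjM : j < M := by omega
    have hj1M : j + 1 < M := by omega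
    have h1 := ((key j hjM).2 k).2
    have h2 := ((key (j+1) hj1M).2 k).1
    push_cast at h1 h2
    linarith
  · intro j hj
    have hjM : j < M := by omega
    have hj1M : j + 1 < M := by omega
    calc dist (Y j) (Y (j+1)) ≤ Real.sqrt d * (2*s) := by
          apply dist_le_of_coords _ _ _ (by linarith)
          intro k
          have h1 := ((key j hjM).2 k)
          have h2 := ((key (j+1) hj1M).2 k)
          push_cast at h1 h2
          rw [abs_le]
          have := ht k; have := htnn k
          constructor <;> nlinarith [h1.1, h1.2, h2.1, h2.2]
      _ ≤ rr := by nlinarith [mul_nonneg (Real.sqrt_nonneg (d:ℝ)) hs.le]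

lemma analysis {d : ℕ} (hd : 2 ≤ d) (δ : ℝ) (hδ : 0 < δ) (g : Fin d → ℝ)
    (hgδ : ∀ k, δ ≤ g k) (hg1 : ∀ k, g k ≤ 1)
    (f r : ℕ → ℝ) (hf : Filter.Tendsto f atTop atTop)
    (hrdef : ∀ n : ℕ, r n = f n * ((Real.log n / n) ^ ((1:ℝ)/(d:ℝ))))
    (M : ℕ → ℕ) (hM : ∀ n, M n = ⌈1 / (r n / (4 * Real.sqrt d))⌉₊) :
    Filter.Tendsto (fun n => (M n : ℝ) * Real.exp (-((n : ℝ) * ∏ k, g k / (M n : ℝ))))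
      atTop (nhds 0) := by
  have hd0 : d ≠ 0 := by omega
  have hdR : (0:ℝ) < d := by positivity
  have ha0 : 0 < Real.sqrt d := Real.sqrt_pos.mpr hdR
  obtain ⟨a, hadef⟩ : ∃ y, y = Real.sqrt d := ⟨_, rfl⟩
  have ha : 0 < a := hadef ▸ ha0
  -- eventual bounds
  have h1 : ∀ᶠ n : ℕ in atTop, 3 ≤ n := eventually_ge_atTop 3
  have h2 : ∀ᶠ n : ℕ in atTop, 16 * a / δ ≤ f n := hf.eventually_ge_atTop _
  have h3 : ∀ᶠ n : ℕ in atTop, 8 * a ≤ f n := hf.eventually_ge_atTop _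
  have h4 : ∀ᶠ n : ℕ in atTop, 2 * Real.log n ≤ δ ^ d * n := by
    have hδd : 0 < δ ^ d / 2 := by positivity
    have hb := Real.isLittleO_log_id_atTop.def hδd
    have := tendsto_natCast_atTop_atTop (R := ℝ) |>.eventually hb
    filter_upwards [this, eventually_ge_atTop 1] with n hn hn1
    have hn1R : (1:ℝ) ≤ n := by exact_mod_cast hn1
    have hlogpos : 0 ≤ Real.log n := Real.log_nonneg hn1R
    rw [Real.norm_eq_abs, Real.norm_eq_abs, abs_of_nonneg hlogpos, id,
      abs_of_nonneg (by linarith)] at hn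
    nlinarith
  have key : ∀ᶠ n : ℕ in atTop,
      (M n : ℝ) * Real.exp (-((n : ℝ) * ∏ k, g k / (M n : ℝ))) ≤ 1 / n := by
    filter_upwards [h1, h2, h3, h4] with n hn3 hf1 hf2 hE1
    have hnR : (3:ℝ) ≤ n := by exact_mod_cast hn3
    have hnpos : (0:ℝ) < n := by linarith
    obtain ⟨L, hLdef⟩ : ∃ y, y = Real.log (n:ℝ) := ⟨_, rfl⟩
    rw [← hLdef] at hE1
    have hL1 : 1 ≤ L := by
      rw [hLdef, ← Real.log_exp 1]
      exact Real.log_le_log (Real.exp_pos 1) (by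
        have := Real.exp_one_lt_d9
        linarith)
    have hLn : L ≤ n := by
      have := Real.log_le_sub_one_of_pos hnpos
      linarith
    obtain ⟨x, hxdef⟩ : ∃ y, y = L / (n:ℝ) := ⟨_, rfl⟩
    have hx0 : 0 < x := by rw [hxdef]; exact div_pos (by linarith) hnpos
    have hx1 : x ≤ 1 := by rw [hxdef]; exact div_le_one_of_le₀ hLn hnpos.le
    obtain ⟨p, hpdef⟩ : ∃ y, y = x ^ ((1:ℝ)/(d:ℝ)) := ⟨_, rfl⟩
    have hp0 : 0 < p := hpdef ▸ Real.rpow_pos_of_pos hx0 _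
    have hxp : x ≤ p := by
      rw [hpdef]
      calc x = x ^ (1:ℝ) := (Real.rpow_one x).symm
        _ ≤ x ^ ((1:ℝ)/(d:ℝ)) := Real.rpow_le_rpow_of_exponent_ge hx0 hx1 (by
            rw [div_le_one hdR]; exact_mod_cast Nat.one_le_iff_ne_zero.mpr hd0)
    have hfpos : 0 < f n := lt_of_lt_of_le (by positivity) hf2
    have hrn : r n = f n * p := by rw [hrdef n, hpdef, hxdef, hLdef]
    have hrpos : 0 < r n := by rw [hrn]; positivity
    obtain ⟨s, hsdef⟩ : ∃ y, y = r n / (4 * a) := ⟨_, rfl⟩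
    have hs0 : 0 < s := by rw [hsdef]; positivity
    have hMn : M n = ⌈1 / s⌉₊ := by rw [hM n, hsdef, hadef]
    have hM1 : 1 ≤ M n := by
      rw [hMn]
      exact Nat.one_le_iff_ne_zero.mpr (by
        simp only [ne_eq, Nat.ceil_eq_zero, not_le]
        positivity)
    have hM0 : (0:ℝ) < M n := by exact_mod_cast hM1
    have hMub : (M n : ℝ) ≤ 1 / s + 1 := by
      rw [hMn]
      exact (Nat.ceil_lt_add_one (by positivity)).le
    -- (a) : M n ≤ n
    have hnp : 1 ≤ (n:ℝ) * p := by
      have : (n:ℝ) * x = L := by rw [hxdef]; field_simp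
      nlinarith
    have hinvs : 1 / s ≤ (n:ℝ) / 2 := by
      rw [hsdef, hrn, div_div_eq_mul_div, one_mul]
      rw [div_le_div_iff₀ (by positivity) (by norm_num)]
      calc (4*a) * 2 = 8 * a := by ring
        _ ≤ f n := hf2
        _ ≤ f n * ((n:ℝ) * p) := le_mul_of_one_le_right hfpos.le hnp
        _ = f n * p * n := by ring
        _ = (n:ℝ) * (f n * p) := by ring
    have hMlen : (M n : ℝ) ≤ n := by linarith
    -- v facts
    obtain ⟨v, hvdef⟩ : ∃ y, y = ∏ k, g k / (M n : ℝ) := ⟨_, rfl⟩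
    rw [← hvdef]
    have hveq : v = (∏ k, g k) / (M n : ℝ) ^ d := by
      rw [hvdef, Finset.prod_div_distrib, Finset.prod_const]
      simp
    have hGδ : δ ^ d ≤ ∏ k, g k := by
      calc δ ^ d = ∏ _k : Fin d, δ := by simp
        _ ≤ ∏ k, g k := Finset.prod_le_prod (fun _ _ => hδ.le) (fun k _ => hgδ k)
    -- (b) : 2 L ≤ n * v
    have hb : 2 * L ≤ (n:ℝ) * v := by
      rcases le_or_gt 1 s with hs1 | hs1
      · -- M n = 1
        have : M n ≤ 1 := by
          rw [hMn, Nat.ceil_le]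
          push_cast
          rw [div_le_one hs0]; exact hs1
        have hMeq : (M n : ℝ) = 1 := by
          have : M n = 1 := le_antisymm this hM1
          exact_mod_cast this
        rw [hveq, hMeq, one_pow, div_one]
        calc 2 * L ≤ δ ^ d * n := hE1
          _ ≤ (∏ k, g k) * n := by nlinarith
          _ = (n:ℝ) * ∏ k, g k := by ring
      · -- s < 1, M ≤ 2/s
        have hM2s : (M n : ℝ) ≤ 2 / s := by
          have : 1 ≤ 1 / s := by rw [le_div_iff₀ hs0]; linarith
          calc (M n : ℝ) ≤ 1/s + 1 := hMub
            _ ≤ 1/s + 1/s := by linarith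
            _ = 2 / s := by ring
        have hMd : (M n : ℝ) ^ d ≤ (2/s) ^ d := pow_le_pow_left₀ hM0.le hM2s d
        have hvlb : δ ^ d * s ^ d / 2 ^ d ≤ v := by
          rw [hveq]
          calc δ ^ d * s ^ d / 2 ^ d = δ ^ d / (2 ^ d / s ^ d) := by
                rw [div_div_eq_mul_div]
            _ = δ ^ d / (2/s) ^ d := by rw [div_pow]
            _ ≤ (∏ k, g k) / (M n : ℝ) ^ d :=
                div_le_div₀ (Finset.prod_nonneg fun k _ => (hδ.le.trans (hgδ k)))
                  hGδ (by positivity) hMd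
        have hpd : p ^ d = x := by
          rw [hpdef, ← Real.rpow_natCast (x ^ ((1:ℝ)/(d:ℝ))) d, ← Real.rpow_mul hx0.le]
          rw [div_mul_cancel₀]
          · exact Real.rpow_one x
          · exact_mod_cast hd0
        have hsd : s ^ d = (f n)^d * x / (4*a)^d := by
          rw [hsdef, hrn, div_pow, mul_pow, hpd]
        have hnsd : (n:ℝ) * s ^ d = (f n)^d * L / (4*a)^d := by
          rw [hsd, hxdef]
          field_simp
        have hδf : 16 * a ≤ δ * f n := by
          have := (div_le_iff₀ hδ).mp hf1
          linarith
        have hpow : (16*a)^d ≤ (δ * f n)^d :=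
          pow_le_pow_left₀ (by positivity) hδf d
        have h2d : (2:ℝ) ≤ 2^d := le_self_pow₀ one_le_two hd0
        calc 2 * L ≤ 2^d * L := mul_le_mul_of_nonneg_right h2d (by linarith)
          _ = (16*a)^d * L / (8*a)^d := by
              rw [show (16*a:ℝ) = 2*(8*a) by ring, mul_pow]
              field_simp
          _ ≤ (δ * f n)^d * L / (8*a)^d := by gcongr <;> linarith
          _ = δ^d * ((n:ℝ) * s^d) / 2^d := by
              rw [hnsd, mul_pow, show (8*a:ℝ) = 2*(4*a) by ring, mul_pow]
              field_simp
          _ = (n:ℝ) * (δ^d * s^d / 2^d) := by ring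
          _ ≤ (n:ℝ) * v := mul_le_mul_of_nonneg_left hvlb hnpos.le
    -- conclude
    have hexp : Real.exp (-((n:ℝ) * v)) ≤ Real.exp (-(2*L)) :=
      Real.exp_le_exp.mpr (by linarith)
    have hexp2 : Real.exp (-(2*L)) = ((n:ℝ)^2)⁻¹ := by
      rw [show -(2*L) = -(L+L) by ring, Real.exp_neg, Real.exp_add, hLdef,
        Real.exp_log hnpos]
      ring
    calc (M n : ℝ) * Real.exp (-((n:ℝ) * v)) ≤ (n:ℝ) * ((n:ℝ)^2)⁻¹ := by
          rw [← hexp2]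
          exact mul_le_mul hMlen hexp (Real.exp_pos _).le hnpos.le
      _ = 1 / n := by
          rw [sq, mul_inv, ← mul_assoc, mul_inv_cancel₀ hnpos.ne', one_mul, one_div]
  apply squeeze_zero' (by filter_upwards with n; positivity) key
  exact tendsto_one_div_atTop_nhds_zero_nat

/-- localized monotone connectivity. Almost surely there exist sample
points `X, X'` with `‖X - q‖ ≤ r_n/2`, `‖X' - q'‖ ≤ r_n/2`, `q ⪯ X`, `X' ⪯ q'`, which
are connected by a monotone chain of sample points inside the box `H(q,q')` whose
consecutive points are at distance at most `r_n`. -/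
theorem stmt_3 {d : ℕ} (hd : 2 ≤ d)
    {Ω : Type*} [MeasurableSpace Ω] (P : Measure Ω) [IsProbabilityMeasure P]
    (X : ℕ → Ω → E d) (hXmeas : ∀ i, Measurable (X i))
    (hindep : iIndepFun X P)
    (hunif : ∀ i, P.map (X i) = volume.restrict (cube d))
    (f : ℕ → ℝ) (hf : Tendsto f atTop atTop)
    (r : ℕ → ℝ) (hr : ∀ n : ℕ, r n = f n * ((Real.log n / n) ^ ((1 : ℝ) / (d : ℝ))))
    (q q' : E d) (hq : q ∈ cube d) (hq' : q' ∈ cube d) (hle : CoordLE q q')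
    (δ : ℝ) (hδ : 0 < δ) (hδle : ∀ i, δ ≤ q' i - q i) (hδmin : ∃ i, q' i - q i = δ) :
    Tendsto
      (fun n : ℕ => P {ω | ∃ x x' : E d,
          (∃ i < n, X i ω = x) ∧ (∃ i < n, X i ω = x') ∧
          dist x q ≤ r n / 2 ∧ dist x' q' ≤ r n / 2 ∧
          CoordLE q x ∧ CoordLE x' q' ∧
          ∃ (m : ℕ) (Y : ℕ → E d), Y 0 = x ∧ Y m = x' ∧
            (∀ j ≤ m, (∃ i < n, X i ω = Y j) ∧ Y j ∈ box q q') ∧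
            (∀ j < m, CoordLE (Y j) (Y (j + 1))) ∧
            (∀ j < m, dist (Y j) (Y (j + 1)) ≤ r n)})
      atTop (nhds 1) := by
  classical
  have hdR : (0:ℝ) < d := by positivity
  have ha : 0 < Real.sqrt d := Real.sqrt_pos.mpr hdR
  -- definitions
  obtain ⟨M, hM⟩ : ∃ M : ℕ → ℕ, M = fun n => ⌈1 / (r n / (4 * Real.sqrt d))⌉₊ := ⟨_, rfl⟩
  obtain ⟨Bx, hBx⟩ : ∃ Bx : ℕ → ℕ → Set (E d), Bx = fun n (j : ℕ) => box
      (WithLp.toLp 2 (fun k => q k + (j : ℝ) * ((q' k - q k) / (M n : ℝ))))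
      (WithLp.toLp 2 (fun k => q k + ((j : ℝ) + 1) * ((q' k - q k) / (M n : ℝ)))) := ⟨_, rfl⟩
  obtain ⟨Fail, hFail⟩ : ∃ F : ℕ → Set Ω, F = fun n =>
      ⋃ j ∈ Finset.range (M n), ⋂ i ∈ Finset.range n, X i ⁻¹' (Bx n j)ᶜ := ⟨_, rfl⟩
  obtain ⟨v, hv⟩ : ∃ v : ℕ → ℝ, v = fun n => ∏ k, (q' k - q k) / (M n : ℝ) := ⟨_, rfl⟩
  have hg0 : ∀ k, 0 ≤ q' k - q k := fun k => by linarith [hle k]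
  have hg1 : ∀ k, q' k - q k ≤ 1 := fun k => by
    have h1 := (hq k).1; have h2 := (hq' k).2; linarith
  have hvnn : ∀ n, 0 ≤ v n := by
    intro n
    rw [hv]
    exact Finset.prod_nonneg fun k _ => div_nonneg (hg0 k) (Nat.cast_nonneg _)
  have hboxcube : box q q' ⊆ cube d := fun y hy k =>
    ⟨le_trans (hq k).1 (hy k).1, le_trans (hy k).2 (hq' k).2⟩
  -- sub-box facts
  have hBsub : ∀ n j, j < M n → Bx n j ⊆ box q q' := by
    intro n j hj y hy k
    have hM1 : (1:ℝ) ≤ M n := by exact_mod_cast Nat.one_le_iff_ne_zero.mpr (by omega)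
    have htnn : 0 ≤ (q' k - q k) / (M n : ℝ) := div_nonneg (hg0 k) (by positivity)
    rw [hBx] at hy
    obtain ⟨h1, h2⟩ := hy k
    simp only [WithLp.ofLp_toLp] at h1 h2
    have hj1 : ((j:ℝ) + 1) ≤ (M n : ℝ) := by exact_mod_cast Nat.succ_le_of_lt hj
    have hMt : (M n : ℝ) * ((q' k - q k) / (M n : ℝ)) = q' k - q k := by
      field_simp
    constructor
    · nlinarith [Nat.cast_nonneg (α := ℝ) j]
    · nlinarith
  -- measurability of Fail
  have hmeasFail : ∀ n, MeasurableSet (Fail n) := by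
    intro n
    rw [hFail, hBx]
    exact Finset.measurableSet_biUnion _ fun j _ =>
      Finset.measurableSet_biInter _ fun i _ => hXmeas i (measurableSet_box _ _).compl
  -- probability bound on Fail
  have hPfail : ∀ n, P (Fail n) ≤
      ENNReal.ofReal ((M n : ℝ) * Real.exp (-((n:ℝ) * v n))) := by
    intro n
    rw [hFail]
    refine le_trans (measure_biUnion_finset_le _ _) ?_
    have hterm : ∀ j ∈ Finset.range (M n),
        P (⋂ i ∈ Finset.range n, X i ⁻¹' (Bx n j)ᶜ) ≤
          ENNReal.ofReal (Real.exp (-((n:ℝ) * v n))) := by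
      intro j hj
      rw [Finset.mem_range] at hj
      have hvol : volume (Bx n j) = ENNReal.ofReal (v n) := by
        rw [hBx, volume_box, hv]
        rw [ENNReal.ofReal_prod_of_nonneg
          (fun k _ => div_nonneg (hg0 k) (Nat.cast_nonneg _))]
        refine Finset.prod_congr rfl fun k _ => ?_
        congr 1
        ring
      rw [hBx] at hvol ⊢
      rw [P_empty_box P X hXmeas hunif hindep _ (measurableSet_box _ _)
        ((hBx ▸ hBsub n j hj).trans hboxcube) n, hvol]
      calc (1 - ENNReal.ofReal (v n)) ^ n
          ≤ (ENNReal.ofReal (Real.exp (-(v n)))) ^ n := by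
            apply pow_le_pow_left₀ (zero_le)
            rw [← ENNReal.ofReal_one, ← ENNReal.ofReal_sub _ (hvnn n)]
            exact ENNReal.ofReal_le_ofReal (by linarith [Real.add_one_le_exp (-(v n))])
        _ = ENNReal.ofReal (Real.exp (-((n:ℝ) * v n))) := by
            rw [← ENNReal.ofReal_pow (Real.exp_nonneg _), ← Real.exp_nat_mul]
            congr 1
            ring
    calc ∑ j ∈ Finset.range (M n), P (⋂ i ∈ Finset.range n, X i ⁻¹' (Bx n j)ᶜ)
        ≤ ∑ _j ∈ Finset.range (M n), ENNReal.ofReal (Real.exp (-((n:ℝ) * v n))) :=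
          Finset.sum_le_sum hterm
      _ = (M n : ENNReal) * ENNReal.ofReal (Real.exp (-((n:ℝ) * v n))) := by
          rw [Finset.sum_const, Finset.card_range, nsmul_eq_mul]
      _ = ENNReal.ofReal ((M n : ℝ) * Real.exp (-((n:ℝ) * v n))) := by
          rw [← ENNReal.ofReal_natCast (M n), ← ENNReal.ofReal_mul (Nat.cast_nonneg _)]
  -- Fail probability tends to 0
  have hfail0 : Tendsto (fun n => P (Fail n)) atTop (nhds 0) := by
    have hanal := analysis hd δ hδ (fun k => q' k - q k) hδle hg1 f r hf hr M
      (by intro n; rw [hM])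
    have h' : Tendsto (fun n => (M n : ℝ) * Real.exp (-((n:ℝ) * v n))) atTop (nhds 0) := by
      simp only [hv]; exact hanal
    have : Tendsto (fun n => ENNReal.ofReal ((M n : ℝ) * Real.exp (-((n:ℝ) * v n))))
        atTop (nhds 0) := by
      have := ENNReal.tendsto_ofReal h'
      simpa using this
    exact tendsto_of_tendsto_of_tendsto_of_le_of_le tendsto_const_nhds this
      (fun n => zero_le) hPfail
  -- 1 - P Fail → 1
  have hone : Tendsto (fun n => 1 - P (Fail n)) atTop (nhds 1) := by
    have := ENNReal.Tendsto.sub (tendsto_const_nhds (x := (1:ENNReal))) hfail0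
      (Or.inl ENNReal.one_ne_top)
    simpa using this
  -- eventual positivity of r
  have hrpos : ∀ᶠ n : ℕ in atTop, 0 < r n := by
    filter_upwards [hf.eventually_ge_atTop 1, eventually_ge_atTop 3] with n hf1 hn3
    have hnR : (3:ℝ) ≤ n := by exact_mod_cast hn3
    have hlog : 0 < Real.log n := Real.log_pos (by linarith)
    rw [hr]
    have : 0 < (Real.log n / n) ^ ((1:ℝ)/(d:ℝ)) :=
      Real.rpow_pos_of_pos (div_pos hlog (by linarith)) _
    nlinarith
  -- inclusion: Failᶜ ⊆ target
  have hincl : ∀ᶠ n : ℕ in atTop, 1 - P (Fail n) ≤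
      P {ω | ∃ x x' : E d,
          (∃ i < n, X i ω = x) ∧ (∃ i < n, X i ω = x') ∧
          dist x q ≤ r n / 2 ∧ dist x' q' ≤ r n / 2 ∧
          CoordLE q x ∧ CoordLE x' q' ∧
          ∃ (m : ℕ) (Y : ℕ → E d), Y 0 = x ∧ Y m = x' ∧
            (∀ j ≤ m, (∃ i < n, X i ω = Y j) ∧ Y j ∈ box q q') ∧
            (∀ j < m, CoordLE (Y j) (Y (j + 1))) ∧
            (∀ j < m, dist (Y j) (Y (j + 1)) ≤ r n)} := by
    filter_upwards [hrpos] with n hrn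
    rw [← prob_compl_eq_one_sub (hmeasFail n)]
    apply measure_mono
    intro ω hω
    have hs0 : 0 < r n / (4 * Real.sqrt d) := by positivity
    have hMn : M n = ⌈1 / (r n / (4 * Real.sqrt d))⌉₊ := by rw [hM]
    have hM1 : 1 ≤ M n := by
      rw [hMn]
      exact Nat.one_le_iff_ne_zero.mpr (by
        simp only [ne_eq, Nat.ceil_eq_zero, not_le]
        positivity)
    have hMc : 1 / (r n / (4 * Real.sqrt d)) ≤ (M n : ℝ) := by rw [hMn]; exact Nat.le_ceil _
    have hsM : (1:ℝ) ≤ (r n / (4 * Real.sqrt d)) * M n := by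
      have h2 := mul_le_mul_of_nonneg_left hMc hs0.le
      rwa [mul_one_div, div_self hs0.ne'] at h2
    have H : ∀ j, j < M n → ∃ i < n, X i ω ∈ box
        (WithLp.toLp 2 (fun k => q k + (j : ℝ) * ((q' k - q k) / (M n : ℝ))))
        (WithLp.toLp 2 (fun k => q k + ((j : ℝ) + 1) * ((q' k - q k) / (M n : ℝ)))) := by
      intro j hj
      rw [hFail] at hω
      simp only [Set.mem_compl_iff, Set.mem_iUnion, Set.mem_iInter, Set.mem_preimage,
        Finset.mem_range] at hω
      push_neg at hω
      obtain ⟨i, hi, hmem⟩ := hω j hj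
      exact ⟨i, hi, by rw [hBx] at hmem; exact hmem⟩
    exact det q q' hle (r n / (4 * Real.sqrt d)) (r n) hs0
      (le_of_eq (by
          have hane : Real.sqrt d ≠ 0 := ne_of_gt ha
          first
          | (field_simp; ring)
          | field_simp))
      (M n) hM1
      (fun k => by
        rw [div_le_iff₀ (by exact_mod_cast hM1 : (0:ℝ) < (M n : ℝ))]
        calc q' k - q k ≤ 1 := hg1 k
          _ ≤ (r n / (4 * Real.sqrt d)) * M n := hsM)
      n (fun i => X i ω) H
  -- conclude
  exact tendsto_of_tendsto_of_tendsto_of_le_of_le' hone tendsto_const_nhds hincl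
    (Eventually.of_forall fun n => prob_le_one)

end
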